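/- Let ℙ be a translation-invariant Borel probability measure on Ω, let m ∈ ℕ, and let A ⊆ 𝕋 satisfy the growth property, with {ω : T_z^ω ∈ A} measurable for every z ∈ ℤ₊². Set Ω_m = {ω ∈ Ω : γ_{(m,1)}^ω = ((0,0),(1,0),…,(m,0),(m,1))}. Then ℙ(T_{(m,1)} ∈ A and Ω_m) ≤ ℙ(T_{(1,1)} ∈ A and Ω_1). -/

import Mathlib

open scoped NNReal

/-- A site of the lattice `ℤ²`. -/
abbrev Site : Type := ℤ × ℤ

/-- The positive quadrant `ℤ₊²`. -/
def posQuad : Set Site := {z : Site | 0 ≤ z.1 ∧ 0 ≤ z.2}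

/-- An admissible (up-right) step. -/
def IsStep (u v : Site) : Prop := v = u + (1, 0) ∨ v = u + (0, 1)

/-- `γ` is an up-right path from `(0,0)` to `z`, i.e. `γ ∈ Γ_z`. -/
def IsPathTo (z : Site) (γ : List Site) : Prop :=
  γ.head? = some ((0, 0) : Site) ∧ γ.getLast? = some z ∧ γ.Chain' IsStep

/-- The length `ω(γ) = Σ_{z ∈ γ} ω(z)` of a path `γ` under the configuration `ω`. -/
noncomputable def plen (ω : Site → ℝ) (γ : List Site) : ℝ := (γ.map ω).sum

/-- `γ ∈ Γ_z` is `ω`-optimal if its length is maximal over `Γ_z`. -/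
def IsOptimal (ω : Site → ℝ) (z : Site) (γ : List Site) : Prop :=
  IsPathTo z γ ∧ ∀ γ' : List Site, IsPathTo z γ' → plen ω γ' ≤ plen ω γ

/-- `γ` is below `γ'`: at every step index, the second coordinate of the site of `γ`
is at most that of the corresponding site of `γ'`. -/
def Below (γ γ' : List Site) : Prop :=
  ∀ (i : ℕ) (h : i < γ.length) (h' : i < γ'.length),
    (γ.get ⟨i, h⟩).2 ≤ (γ'.get ⟨i, h'⟩).2

/-- `γ` is the low-optimal path of `Γ_z`: it is `ω`-optimal and below every
`ω`-optimal path of `Γ_z`. -/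
def IsLowOptimal (ω : Site → ℝ) (z : Site) (γ : List Site) : Prop :=
  IsOptimal ω z γ ∧ ∀ γ' : List Site, IsOptimal ω z γ' → Below γ γ'

open Classical in
/-- The low-optimal path `γ_z^ω` (an arbitrary default when it does not exist). -/
noncomputable def lowOpt (ω : Site → ℝ) (z : Site) : List Site :=
  if h : ∃ γ : List Site, IsLowOptimal ω z γ then h.choose else []

/-- The vertex set `V(T_z^ω) = {z' ∈ ℤ₊² : z ∈ γ_{z'}^ω}` of the subtree rooted at `z`. -/
def treeV (ω : Site → ℝ) (z : Site) : Set Site :=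
  {z' : Site | z' ∈ posQuad ∧ z ∈ lowOpt ω z'}

/-- A (rooted) subtree of the last passage percolation tree, recorded by its root
and its vertex set. -/
structure LPPTree where
  root : Site
  verts : Set Site

/-- The subtree `T_z^ω` of the last passage percolation tree rooted at `z`. -/
def subtree (ω : Site → ℝ) (z : Site) : LPPTree := ⟨z, treeV ω z⟩

/-- The set `𝕋` of all subtrees `T_z^ω`, `z ∈ ℤ₊²`, `ω ∈ Ω`. -/
def TreeSet : Set LPPTree :=
  {T : LPPTree | ∃ (ω : Site → ℝ) (z : Site),
    (∀ s : Site, 0 ≤ ω s) ∧ z ∈ posQuad ∧ T = subtree ω z}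

/-- A set `A ⊆ 𝕋` satisfies the growth property if whenever `T ∈ A`, `T' ∈ 𝕋` and
`V(T) - r(T) ⊆ V(T') - r(T')`, then `T' ∈ A`. -/
def GrowthProperty (A : Set LPPTree) : Prop :=
  ∀ T ∈ A, ∀ T' ∈ TreeSet,
    (· - T.root) '' T.verts ⊆ (· - T'.root) '' T'.verts → T' ∈ A

/-- A point of the configuration space `Ω = [0,∞)^{ℤ²}`. -/
abbrev CfgNN : Type := Site → ℝ≥0

/-- The real-valued configuration associated to a point of `Ω`. -/
noncomputable def toCfg (ω : CfgNN) : Site → ℝ := fun z => (ω z : ℝ)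

/-- The translation operator `τ_a(ω) = ω(a + ·)` on `Ω`. -/
def shift (a : Site) (ω : CfgNN) : CfgNN := fun z => ω (a + z)

/-- The path `((0,0), (1,0), …, (m,0), (m,1))`. -/
def axisPath (m : ℕ) : List Site :=
  ((List.range (m + 1)).map fun i => ((i : ℤ), 0)) ++ [((m : ℤ), 1)]

/-- The event `Ω_m = {ω : γ_{(m,1)}^ω = ((0,0),(1,0),…,(m,0),(m,1))}`. -/
def OmegaM (m : ℕ) : Set CfgNN :=
  {ω : CfgNN | lowOpt (toCfg ω) ((m : ℤ), 1) = axisPath m}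

open MeasureTheory

/-! ### Basic path lemmas -/

def PathFT (a z : Site) (γ : List Site) : Prop :=
  γ.head? = some a ∧ γ.getLast? = some z ∧ γ.Chain' IsStep

lemma IsPathTo.pathFT {z : Site} {γ : List Site} (h : IsPathTo z γ) :
    PathFT ((0, 0) : Site) z γ := h

lemma PathFT.isPathTo {z : Site} {γ : List Site} (h : PathFT ((0, 0) : Site) z γ) :
    IsPathTo z γ := h

namespace PathFT

variable {a z : Site} {γ : List Site}

lemma ne_nil (h : PathFT a z γ) : γ ≠ [] := by
  intro e; rw [e] at h; simp [PathFT] at h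

lemma length_pos (h : PathFT a z γ) : 0 < γ.length :=
  List.length_pos_iff.2 h.ne_nil

lemma getElem_zero (h : PathFT a z γ) (h0 : 0 < γ.length) : γ[0] = a := by
  have h1 := h.1
  rw [List.head?_eq_getElem?, List.getElem?_eq_getElem h0] at h1
  exact Option.some_injective _ h1

lemma getElem_last (h : PathFT a z γ) (hl : γ.length - 1 < γ.length) :
    γ[γ.length - 1] = z := by
  have h1 := h.2.1
  rw [List.getLast?_eq_getElem?, List.getElem?_eq_getElem hl] at h1
  exact Option.some_injective _ h1

lemma step (h : PathFT a z γ) {i : ℕ} (hi : i + 1 < γ.length) :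
    IsStep (γ[i]'(by omega)) (γ[i+1]'hi) := by
  have := List.isChain_iff_getElem.1 h.2.2 i (by omega)
  simpa [List.get_eq_getElem] using this

end PathFT

lemma IsStep.facts {u v : Site} (h : IsStep u v) :
    u.1 ≤ v.1 ∧ u.2 ≤ v.2 ∧ v.1 + v.2 = u.1 + u.2 + 1 := by
  rcases h with h | h <;> subst h <;>
    simp [Prod.fst_add, Prod.snd_add] <;> omega

namespace PathFT

variable {a z : Site} {γ : List Site}

lemma coord_sum (h : PathFT a z γ) :
    ∀ i (hi : i < γ.length), (γ[i]'hi).1 + (γ[i]'hi).2 = a.1 + a.2 + i := by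
  intro i
  induction i with
  | zero => intro hi; rw [h.getElem_zero hi]; simp
  | succ k ih =>
    intro hi
    have hk : k < γ.length := by omega
    have hs := (h.step hi).facts
    have hk' := ih hk
    omega

lemma mono (h : PathFT a z γ) {i j : ℕ} (hij : i ≤ j) (hj : j < γ.length) :
    (γ[i]'(lt_of_le_of_lt hij hj)).1 ≤ (γ[j]'hj).1 ∧
      (γ[i]'(lt_of_le_of_lt hij hj)).2 ≤ (γ[j]'hj).2 := by
  induction j with
  | zero => have : i = 0 := Nat.le_zero.1 hij; subst this; exact ⟨le_refl _, le_refl _⟩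
  | succ k ih =>
    rcases Nat.lt_or_ge i (k + 1) with hik | hik
    · have hik' : i ≤ k := by omega
      have hk : k < γ.length := by omega
      have h1 := ih hik' hk
      have hs := (h.step hj).facts
      exact ⟨le_trans h1.1 hs.1, le_trans h1.2 hs.2.1⟩
    · have : i = k + 1 := by omega
      subst this; exact ⟨le_refl _, le_refl _⟩

lemma length_eq (h : PathFT a z γ) :
    (γ.length : ℤ) = z.1 + z.2 - a.1 - a.2 + 1 := by
  have hl := h.length_pos
  have h1 := h.coord_sum (γ.length - 1) (by omega)
  rw [h.getElem_last (by omega)] at h1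
  have h2 : ((γ.length - 1 : ℕ) : ℤ) = (γ.length : ℤ) - 1 := by
    omega
  omega

lemma nonneg_coords (h : PathFT ((0,0) : Site) z γ) {i : ℕ} (hi : i < γ.length) :
    0 ≤ (γ[i]'hi).1 ∧ 0 ≤ (γ[i]'hi).2 := by
  have := h.mono (Nat.zero_le i) hi
  rw [h.getElem_zero h.length_pos] at this
  exact this

end PathFT

/-! ### plen lemmas -/

lemma plen_nil (ω : Site → ℝ) : plen ω [] = 0 := rfl

lemma plen_cons (ω : Site → ℝ) (s : Site) (l : List Site) :
    plen ω (s :: l) = ω s + plen ω l := by simp [plen]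

lemma plen_append (ω : Site → ℝ) (l₁ l₂ : List Site) :
    plen ω (l₁ ++ l₂) = plen ω l₁ + plen ω l₂ := by simp [plen]

lemma plen_head {ω : Site → ℝ} {γ : List Site} {b : Site} (h : γ.head? = some b) :
    plen ω γ = ω b + plen ω γ.tail := by
  cases γ with
  | nil => simp at h
  | cons x t =>
    simp at h; subst h; simp [plen_cons]

lemma plen_take_drop (ω : Site → ℝ) (γ : List Site) (n : ℕ) :
    plen ω γ = plen ω (γ.take n) + plen ω (γ.drop n) := by
  rw [← plen_append, List.take_append_drop]

lemma plen_shift (ω : Site → ℝ) (t : Site) (γ : List Site) :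
    plen (fun s => ω (t + s)) γ = plen ω (γ.map (· + t)) := by
  have h : (fun s : Site => ω (t + s)) = fun s : Site => ω (s + t) := by
    funext s; rw [add_comm]
  simp [plen, List.map_map, Function.comp_def, h]

/-! ### lowOpt lemmas -/

lemma lowOptimal_unique {ω : Site → ℝ} {z : Site} {γ₁ γ₂ : List Site}
    (h1 : IsLowOptimal ω z γ₁) (h2 : IsLowOptimal ω z γ₂) : γ₁ = γ₂ := by
  have p1 : PathFT ((0,0) : Site) z γ₁ := h1.1.1
  have p2 : PathFT ((0,0) : Site) z γ₂ := h2.1.1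
  have l1 := p1.length_eq
  have l2 := p2.length_eq
  have hlen : γ₁.length = γ₂.length := by omega
  apply List.ext_getElem hlen
  intro n h₁ h₂
  have b12 := h1.2 γ₂ h2.1 n h₁ h₂
  have b21 := h2.2 γ₁ h1.1 n h₂ h₁
  simp only [List.get_eq_getElem] at b12 b21
  have s1 := p1.coord_sum n h₁
  have s2 := p2.coord_sum n h₂
  have h2eq : (γ₁[n]'h₁).2 = (γ₂[n]'h₂).2 := le_antisymm b12 b21
  rw [Prod.ext_iff]
  constructor
  · omega
  · exact h2eq

lemma lowOpt_eq {ω : Site → ℝ} {z : Site} {γ : List Site}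
    (h : IsLowOptimal ω z γ) : lowOpt ω z = γ := by
  have hex : ∃ γ', IsLowOptimal ω z γ' := ⟨γ, h⟩
  rw [lowOpt, dif_pos hex]
  exact lowOptimal_unique hex.choose_spec h

lemma isLowOptimal_lowOpt {ω : Site → ℝ} {z : Site} (h : lowOpt ω z ≠ []) :
    IsLowOptimal ω z (lowOpt ω z) := by
  by_cases hex : ∃ γ', IsLowOptimal ω z γ'
  · rw [lowOpt, dif_pos hex]; exact hex.choose_spec
  · exfalso; rw [lowOpt, dif_neg hex] at h; exact h rfl

lemma lowOpt_eq_iff {ω : Site → ℝ} {z : Site} {γ : List Site} (hγ : γ ≠ []) :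
    lowOpt ω z = γ ↔ IsLowOptimal ω z γ := by
  constructor
  · intro h
    have h' : lowOpt ω z ≠ [] := by rw [h]; exact hγ
    have := isLowOptimal_lowOpt h'
    rwa [h] at this
  · exact lowOpt_eq

/-! ### path surgery -/

namespace PathFT

variable {a b c z : Site} {γ γ₁ γ₂ : List Site}

lemma take_path (h : PathFT a z γ) {i : ℕ} (hi : i < γ.length) :
    PathFT a (γ[i]'hi) (γ.take (i + 1)) := by
  refine ⟨?_, ?_, h.2.2.take _⟩
  · rw [List.head?_eq_getElem?, List.getElem?_take, if_pos (by omega),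
      List.getElem?_eq_getElem h.length_pos, h.getElem_zero]
  · have hlen : (γ.take (i + 1)).length = i + 1 := by
      rw [List.length_take]; omega
    rw [List.getLast?_eq_getElem?, hlen, Nat.add_sub_cancel, List.getElem?_take,
      if_pos (by omega), List.getElem?_eq_getElem hi]

lemma drop_path (h : PathFT a z γ) {i : ℕ} (hi : i < γ.length) :
    PathFT (γ[i]'hi) z (γ.drop i) := by
  refine ⟨?_, ?_, h.2.2.drop _⟩
  · rw [List.head?_drop, List.getElem?_eq_getElem hi]
  · have hl := h.length_pos
    rw [List.getLast?_eq_getElem?, List.length_drop, List.getElem?_drop]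
    have he : i + (γ.length - i - 1) = γ.length - 1 := by omega
    rw [he, List.getElem?_eq_getElem (by omega), h.getElem_last (by omega)]

lemma append_path (h1 : PathFT a b γ₁) (h2 : PathFT b c γ₂) :
    PathFT a c (γ₁ ++ γ₂.tail) := by
  obtain ⟨h2h, h2l, h2c⟩ := h2
  cases γ₂ with
  | nil => simp at h2h
  | cons x t =>
    have hx : x = b := by simpa using h2h
    rcases List.isChain_cons.1 h2c with ⟨hstep, hct⟩
    refine ⟨?_, ?_, ?_⟩
    · rw [List.tail_cons, List.head?_append, h1.1]; rfl
    · cases t with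
      | nil =>
        have hcb : b = c := by rw [← hx]; simpa using h2l
        simp only [List.tail_cons, List.append_nil]
        rw [h1.2.1, hcb]
      | cons y s =>
        simp only [List.tail_cons]
        rw [List.getLast?_append]
        rw [List.getLast?_cons_cons] at h2l
        rw [h2l]; rfl
    · refine h1.2.2.append hct ?_
      intro u hu v hv
      have hub : u = b := by
        rw [h1.2.1] at hu
        symm; simpa using hu
      rw [hub, ← hx]
      exact hstep v hv

lemma map_add (h : PathFT a z γ) (t : Site) :
    PathFT (a + t) (z + t) (γ.map (· + t)) := by
  refine ⟨?_, ?_, ?_⟩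
  · rw [List.head?_map, h.1]; rfl
  · rw [List.getLast?_map, h.2.1]; rfl
  · show List.IsChain IsStep _
    rw [List.isChain_map]
    refine h.2.2.imp ?_
    intro u v huv
    rcases huv with huv | huv <;> [left; right] <;> subst huv <;> rw [add_right_comm]

lemma map_sub (h : PathFT a z γ) (t : Site) :
    PathFT (a - t) (z - t) (γ.map (· - t)) := by
  have := h.map_add (-t)
  simpa [sub_eq_add_neg] using this

end PathFT

/-! ### prefix of a low-optimal path -/

lemma IsLowOptimal.take_lowOpt {ω : Site → ℝ} {z' : Site} {γ : List Site}
    (h : IsLowOptimal ω z' γ) {i : ℕ} (hi : i < γ.length) :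
    IsLowOptimal ω (γ[i]'hi) (γ.take (i + 1)) := by
  have hp : PathFT ((0,0) : Site) z' γ := h.1.1
  have hpt : PathFT ((0,0) : Site) (γ[i]'hi) (γ.take (i + 1)) := hp.take_path hi
  have hpd : PathFT (γ[i]'hi) z' (γ.drop i) := hp.drop_path hi
  have htake_len : (γ.take (i + 1)).length = i + 1 := by
    rw [List.length_take]; omega
  have hopt : IsOptimal ω (γ[i]'hi) (γ.take (i + 1)) := by
    refine ⟨hpt.isPathTo, ?_⟩
    intro δ hδ
    have hδp : PathFT ((0,0) : Site) (γ[i]'hi) δ := hδ.pathFT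
    have happ : PathFT ((0,0) : Site) z' (δ ++ (γ.drop i).tail) :=
      hδp.append_path hpd
    have hopt' := h.1.2 _ happ.isPathTo
    rw [List.tail_drop] at hopt'
    rw [plen_append] at hopt'
    have e2 := plen_take_drop ω γ (i + 1)
    linarith
  refine ⟨hopt, ?_⟩
  intro δ hδopt
  have hδp : PathFT ((0,0) : Site) (γ[i]'hi) δ := hδopt.1.pathFT
  have happ : PathFT ((0,0) : Site) z' (δ ++ γ.drop (i + 1)) := by
    have := hδp.append_path hpd
    rwa [List.tail_drop] at this
  have heq : plen ω δ = plen ω (γ.take (i + 1)) :=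
    le_antisymm (hopt.2 δ hδopt.1) (hδopt.2 (γ.take (i + 1)) hpt.isPathTo)
  have hηopt : IsOptimal ω z' (δ ++ γ.drop (i + 1)) := by
    refine ⟨happ.isPathTo, ?_⟩
    intro δ' hδ'
    have h1 := h.1.2 δ' hδ'
    have e2 := plen_take_drop ω γ (i + 1)
    rw [plen_append, heq]
    linarith
  have hbel := h.2 _ hηopt
  intro j hj hj'
  have hjlen : j < i + 1 := by rw [htake_len] at hj; exact hj
  have hδlen : δ.length = i + 1 := by
    have l1 := hδp.length_eq
    have l2 := hpt.length_eq
    rw [htake_len] at l2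
    omega
  have hjγ : j < γ.length := by omega
  have hηj : j < (δ ++ γ.drop (i + 1)).length := by
    rw [List.length_append]; omega
  have hb := hbel j hjγ hηj
  simp only [List.get_eq_getElem] at hb ⊢
  rw [List.getElem_take]
  rw [List.getElem_append_left (by omega)] at hb
  exact hb

/-! ### axisPath lemmas -/

lemma axisPath_eq (m : ℕ) :
    axisPath m = ((List.range (m + 1)).map fun i : ℕ => ((i : ℤ), (0 : ℤ))) ++ [((m : ℤ), 1)] := by
  simp [axisPath, List.map_eq_flatMap, List.flatMap_assoc]

lemma axisPath_length (m : ℕ) : (axisPath m).length = m + 2 := by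
  rw [axisPath_eq, List.length_append, List.length_map, List.length_range]
  rfl

lemma axisPath_ne_nil (m : ℕ) : axisPath m ≠ [] := by
  intro h
  have := axisPath_length m
  rw [h] at this
  simp at this

lemma axisPath_getElem_le {m j : ℕ} (hj : j < m + 1) (h2 : j < (axisPath m).length) :
    (axisPath m)[j] = ((j : ℤ), (0 : ℤ)) := by
  rw [List.getElem_of_eq (axisPath_eq m)]
  rw [List.getElem_append_left (by simpa using hj), List.getElem_map, List.getElem_range]

lemma axisPath_getElem_last {m : ℕ} (h : m + 1 < (axisPath m).length) :
    (axisPath m)[m + 1] = ((m : ℤ), (1 : ℤ)) := by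
  rw [List.getElem_of_eq (axisPath_eq m)]
  rw [List.getElem_append_right (by simp)]
  simp

lemma mem_axisPath_last (m : ℕ) : ((m : ℤ), (1 : ℤ)) ∈ axisPath m := by
  rw [axisPath_eq]
  exact List.mem_append_right _ (List.mem_singleton.2 rfl)

/-! ### the core deterministic lemma -/

lemma core_lemma (ω : Site → ℝ) (m : ℕ) (hm : 1 ≤ m)
    (hΩ : lowOpt ω ((m : ℤ), 1) = axisPath m)
    (z' : Site) (hmem : ((m : ℤ), 1) ∈ lowOpt ω z') :
    (m : ℤ) ≤ z'.1 ∧ 1 ≤ z'.2 ∧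
      IsLowOptimal (fun s => ω ((((m : ℤ) - 1, 0) : Site) + s)) (z' - ((m : ℤ) - 1, 0))
        (((lowOpt ω z').drop (m - 1)).map (· - (((m : ℤ) - 1, 0) : Site))) := by
  set t : Site := ((m : ℤ) - 1, 0) with ht
  set ω' : Site → ℝ := fun s => ω (t + s) with hω'
  set γ := lowOpt ω z' with hγdef
  have hne : γ ≠ [] := List.ne_nil_of_mem hmem
  have hlo : IsLowOptimal ω z' γ := isLowOptimal_lowOpt hne
  have hp : PathFT ((0, 0) : Site) z' γ := hlo.1.1
  obtain ⟨i, hi, hgi⟩ := List.mem_iff_getElem.1 hmem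
  have hsum := hp.coord_sum i hi
  rw [hgi] at hsum
  have him : i = m + 1 := by simp at hsum; omega
  subst him
  have hγlen : m + 2 ≤ γ.length := by omega
  -- the prefix of γ of length m+2 is the axis path
  have hptake : IsLowOptimal ω ((m : ℤ), 1) (γ.take (m + 1 + 1)) := by
    have h1 := hlo.take_lowOpt hi
    rwa [hgi] at h1
  have htake_eq : γ.take (m + 1 + 1) = axisPath m := by
    have h1 := lowOpt_eq hptake
    rw [hΩ] at h1
    exact h1.symm
  have hm1lt : m - 1 < γ.length := by omega
  have htklen : m - 1 < (γ.take (m + 1 + 1)).length := by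
    rw [List.length_take]; omega
  have hγm1 : γ[m - 1]'hm1lt = t := by
    have e1 : (γ.take (m + 1 + 1))[m - 1]'htklen = γ[m - 1]'hm1lt :=
      List.getElem_take
    rw [← e1, List.getElem_of_eq htake_eq,
      axisPath_getElem_le (by omega) (by rw [axisPath_length]; omega)]
    have hc : ((m - 1 : ℕ) : ℤ) = (m : ℤ) - 1 := by omega
    rw [ht, Prod.ext_iff]
    exact ⟨hc, rfl⟩
  set suf := γ.drop (m - 1) with hsufdef
  have hsuf_len : suf.length = γ.length - (m - 1) := List.length_drop
  have hsufp : PathFT t z' suf := by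
    have h1 := hp.drop_path hm1lt
    rwa [hγm1] at h1
  set σ := suf.map (· - t) with hσdef
  have hσlen : σ.length = suf.length := List.length_map _
  have h00 : t - t = ((0, 0) : Site) := by simp; rfl
  have hσp : PathFT ((0, 0) : Site) (z' - t) σ := by
    have h1 := hsufp.map_sub t
    rwa [h00] at h1
  have hback : σ.map (· + t) = suf := by
    rw [hσdef, List.map_map]
    have hfun : ((· + t) ∘ (· - t) : Site → Site) = id := by
      funext s; simp
    rw [hfun, List.map_id]
  have hplenσ : plen ω' σ = plen ω suf := by
    rw [hω', plen_shift, hback]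
  set pre := γ.take m with hpredef
  have hpre_len : pre.length = m := by rw [hpredef, List.length_take]; omega
  have hprep : PathFT ((0, 0) : Site) t pre := by
    have h1 := hp.take_path hm1lt
    rw [hγm1] at h1
    have he : m - 1 + 1 = m := by omega
    rwa [he] at h1
  have hsuftail : suf.tail = γ.drop m := by
    rw [hsufdef, List.tail_drop]
    congr 1
    omega
  have hsufhead : plen ω suf = ω t + plen ω (γ.drop m) := by
    rw [plen_head hsufp.1, hsuftail]
  have hγsplit : plen ω γ = plen ω pre + plen ω (γ.drop m) := plen_take_drop ω γ m
  have hshift : ∀ δ : List Site, PathFT ((0, 0) : Site) (z' - t) δ →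
      PathFT t z' (δ.map (· + t)) ∧ plen ω' δ = plen ω (δ.map (· + t)) := by
    intro δ hδ
    constructor
    · have h1 := hδ.map_add t
      have e0 : ((0, 0) : Site) + t = t := by simp
      have e1 : z' - t + t = z' := by simp
      rwa [e0, e1] at h1
    · rw [hω', plen_shift]
  have hσopt : IsOptimal ω' (z' - t) σ := by
    refine ⟨hσp.isPathTo, ?_⟩
    intro δ hδ
    have hδp : PathFT ((0, 0) : Site) (z' - t) δ := hδ.pathFT
    obtain ⟨hδhat, hδplen⟩ := hshift δ hδp
    have happ := hprep.append_path hδhat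
    have h1 := hlo.1.2 _ happ.isPathTo
    rw [plen_append] at h1
    have h2 : plen ω (δ.map (· + t)) = ω t + plen ω ((δ.map (· + t)).tail) :=
      plen_head hδhat.1
    rw [hδplen, hplenσ, hsufhead, h2]
    linarith
  refine ⟨?_, ?_, hσopt, ?_⟩
  · have h1 := hp.mono (i := m + 1) (j := γ.length - 1) (by omega) (by omega)
    rw [hgi, hp.getElem_last] at h1
    exact h1.1
  · have h1 := hp.mono (i := m + 1) (j := γ.length - 1) (by omega) (by omega)
    rw [hgi, hp.getElem_last] at h1
    exact h1.2
  · intro δ hδopt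
    have hδp : PathFT ((0, 0) : Site) (z' - t) δ := hδopt.1.pathFT
    obtain ⟨hδhat, hδplen⟩ := hshift δ hδp
    have heqδ : plen ω' δ = plen ω' σ :=
      le_antisymm (hσopt.2 δ hδopt.1) (hδopt.2 σ hσp.isPathTo)
    have happ := hprep.append_path hδhat
    have h2 : plen ω (δ.map (· + t)) = ω t + plen ω ((δ.map (· + t)).tail) :=
      plen_head hδhat.1
    have hηopt : IsOptimal ω z' (pre ++ (δ.map (· + t)).tail) := by
      refine ⟨happ.isPathTo, ?_⟩
      intro δ' hδ'
      have h1 := hlo.1.2 δ' hδ'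
      rw [plen_append]
      have h3 : plen ω ((δ.map (· + t)).tail) = plen ω (γ.drop m) := by
        have h4 := hδplen
        have h5 := heqδ
        have h6 := hplenσ
        have h7 := hsufhead
        linarith
      linarith
    have hbel := hlo.2 _ hηopt
    intro j hjσ hjδ
    simp only [List.get_eq_getElem]
    have hδlen : δ.length = σ.length := by
      have l1 := hδp.length_eq
      have l2 := hσp.length_eq
      omega
    cases j with
    | zero =>
      rw [hσp.getElem_zero]
      have h1 := hδp.nonneg_coords hjδ
      exact h1.2
    | succ k =>
      have hsuf_k : k + 1 < suf.length := by rw [hσlen] at hjσ; exact hjσ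
      have hγmk : m + k < γ.length := by omega
      have hδhatlen : (δ.map (· + t)).length = δ.length := List.length_map _
      have hηmk : m + k < (pre ++ (δ.map (· + t)).tail).length := by
        rw [List.length_append, hpre_len, List.length_tail, hδhatlen]
        omega
      have hb := hbel (m + k) hγmk hηmk
      simp only [List.get_eq_getElem] at hb
      have e1' : suf[k + 1]'hsuf_k = γ[(m - 1) + (k + 1)]'(by omega) :=
        List.getElem_drop
      have e1 : γ[m + k]'hγmk = suf[k + 1]'hsuf_k := by
        rw [e1']
        congr 1
        omega
      have e2 : σ[k + 1]'hjσ = suf[k + 1]'hsuf_k - t := List.getElem_map _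
      have e3 : (pre ++ (δ.map (· + t)).tail)[m + k]'hηmk = δ[k + 1]'hjδ + t := by
        rw [List.getElem_append_right (by rw [hpre_len]; omega)]
        simp only [hpre_len]
        have hidx : m + k - m = k := by omega
        simp only [hidx]
        rw [List.getElem_tail, List.getElem_map]
      rw [e1, e3] at hb
      rw [e2]
      have ht2 : t.2 = 0 := by rw [ht]
      simp only [Prod.snd_sub, Prod.snd_add, ht2] at hb ⊢
      linarith

/-! ### consequences of the core lemma -/

lemma core_mem (ω : Site → ℝ) (m : ℕ) (hm : 1 ≤ m)
    (hΩ : lowOpt ω ((m : ℤ), 1) = axisPath m)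
    (z' : Site) (hmem : ((m : ℤ), 1) ∈ lowOpt ω z') :
    z' - (((m : ℤ) - 1, 0) : Site) ∈ posQuad ∧
      ((1 : ℤ), (1 : ℤ)) ∈
        lowOpt (fun s => ω ((((m : ℤ) - 1, 0) : Site) + s))
          (z' - (((m : ℤ) - 1, 0) : Site)) := by
  obtain ⟨h1, h2, h3⟩ := core_lemma ω m hm hΩ z' hmem
  have hloeq := lowOpt_eq h3
  constructor
  · refine ⟨?_, ?_⟩
    · show (0 : ℤ) ≤ (z' - (((m : ℤ) - 1, 0) : Site)).1
      rw [Prod.fst_sub]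
      simp only []
      omega
    · show (0 : ℤ) ≤ (z' - (((m : ℤ) - 1, 0) : Site)).2
      rw [Prod.snd_sub]
      simp only []
      omega
  · rw [hloeq]
    set t : Site := ((m : ℤ) - 1, 0) with ht
    set γ := lowOpt ω z' with hγdef
    have hne : γ ≠ [] := List.ne_nil_of_mem hmem
    have hlo : IsLowOptimal ω z' γ := isLowOptimal_lowOpt hne
    have hp : PathFT ((0, 0) : Site) z' γ := hlo.1.1
    obtain ⟨i, hi, hgi⟩ := List.mem_iff_getElem.1 hmem
    have hsum := hp.coord_sum i hi
    rw [hgi] at hsum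
    have him : i = m + 1 := by simp at hsum; omega
    subst him
    have hdl : (γ.drop (m - 1)).length = γ.length - (m - 1) := List.length_drop
    have h2lt : 2 < ((γ.drop (m - 1)).map (· - t)).length := by
      rw [List.length_map]; omega
    refine List.mem_iff_getElem.2 ⟨2, h2lt, ?_⟩
    have e2 : ((γ.drop (m - 1)).map (· - t))[2]'h2lt =
        (γ.drop (m - 1))[2]'(by omega) - t := List.getElem_map _
    have e1 : (γ.drop (m - 1))[2]'(by omega) = γ[(m - 1) + 2]'(by omega) :=
      List.getElem_drop
    have e0 : γ[(m - 1) + 2]'(by omega) = γ[m + 1]'hi := by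
      congr 1
      omega
    rw [e2, e1, e0, hgi, ht, Prod.ext_iff]
    constructor
    · rw [Prod.fst_sub]
      all_goals try simp
      all_goals omega
    · rw [Prod.snd_sub]
      all_goals try simp
      all_goals omega

lemma core_omega1 (ω : Site → ℝ) (m : ℕ) (hm : 1 ≤ m)
    (hΩ : lowOpt ω ((m : ℤ), 1) = axisPath m) :
    lowOpt (fun s => ω ((((m : ℤ) - 1, 0) : Site) + s)) ((1 : ℤ), (1 : ℤ)) =
      axisPath 1 := by
  have hmem : ((m : ℤ), 1) ∈ lowOpt ω ((m : ℤ), 1) := by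
    rw [hΩ]; exact mem_axisPath_last m
  obtain ⟨h1, h2, h3⟩ := core_lemma ω m hm hΩ ((m : ℤ), 1) hmem
  rw [hΩ] at h3
  have hsub : (((m : ℤ), 1) : Site) - (((m : ℤ) - 1, 0) : Site) = ((1 : ℤ), (1 : ℤ)) := by
    rw [Prod.ext_iff]
    constructor
    · rw [Prod.fst_sub]; simp
    · rw [Prod.snd_sub]; simp
  rw [hsub] at h3
  have hloeq := lowOpt_eq h3
  rw [hloeq]
  -- now show the explicit list is axisPath 1
  set t : Site := ((m : ℤ) - 1, 0) with ht
  have hdl : ((axisPath m).drop (m - 1)).length = 3 := by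
    rw [List.length_drop, axisPath_length]; omega
  refine List.ext_getElem ?_ ?_
  · rw [List.length_map, hdl, axisPath_length]
  · intro n hn₁ hn₂
    rw [List.length_map, hdl] at hn₁
    have hax : m - 1 + n < (axisPath m).length := by rw [axisPath_length]; omega
    have e2 : (((axisPath m).drop (m - 1)).map (· - t))[n]'(by rw [List.length_map, hdl]; omega) =
        ((axisPath m).drop (m - 1))[n]'(by omega) - t := List.getElem_map _
    have e1 : ((axisPath m).drop (m - 1))[n]'(by omega) = (axisPath m)[m - 1 + n]'hax :=
      List.getElem_drop
    rw [e2, e1]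
    interval_cases n
    · rw [axisPath_getElem_le (by omega) hax, axisPath_getElem_le (show 0 < 1 + 1 by omega) hn₂]
      rw [Prod.ext_iff, Prod.fst_sub, Prod.snd_sub, ht]
      constructor
      all_goals try simp
      all_goals omega
    · have hll : (axisPath m)[m - 1 + 1]'hax = (((m - 1 + 1 : ℕ) : ℤ), (0 : ℤ)) :=
        axisPath_getElem_le (by omega) hax
      have hrr : (axisPath 1)[1]'hn₂ = (((1 : ℕ) : ℤ), (0 : ℤ)) :=
        axisPath_getElem_le (by omega) hn₂
      rw [hll, hrr, Prod.ext_iff, Prod.fst_sub, Prod.snd_sub, ht]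
      constructor
      all_goals try simp
      all_goals omega
    · have e0 : (axisPath m)[m - 1 + 2]'hax =
          (axisPath m)[m + 1]'(by rw [axisPath_length]; omega) := by
        congr 1
        omega
      have hll := axisPath_getElem_last (m := m) (by rw [axisPath_length]; omega)
      have hrr : (axisPath 1)[2]'hn₂ = ((1 : ℤ), (1 : ℤ)) :=
        axisPath_getElem_last (m := 1) (by rw [axisPath_length]; omega)
      rw [e0, hll, hrr, Prod.ext_iff, Prod.fst_sub, Prod.snd_sub, ht]
      constructor
      all_goals try simp
      all_goals omega

/-! ### measurability -/

lemma measurable_shift (a : Site) : Measurable (shift a : CfgNN → CfgNN) :=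
  measurable_pi_lambda _ fun z => measurable_pi_apply (a + z)

lemma measurable_plen (γ : List Site) :
    Measurable fun ω : CfgNN => plen (toCfg ω) γ := by
  induction γ with
  | nil => simpa [plen] using measurable_const
  | cons s l ih =>
    have he : (fun ω : CfgNN => plen (toCfg ω) (s :: l)) =
        fun ω : CfgNN => ((ω s : ℝ) + plen (toCfg ω) l) := by
      funext ω; simp [plen, toCfg]
    rw [he]
    exact (measurable_coe_nnreal_real.comp (measurable_pi_apply s)).add ih

lemma measurableSet_isOptimal (z : Site) (γ : List Site) :
    MeasurableSet {ω : CfgNN | IsOptimal (toCfg ω) z γ} := by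
  have he : {ω : CfgNN | IsOptimal (toCfg ω) z γ} =
      {ω : CfgNN | IsPathTo z γ} ∩
        ⋂ γ' : List Site,
          {ω : CfgNN | IsPathTo z γ' → plen (toCfg ω) γ' ≤ plen (toCfg ω) γ} := by
    ext ω
    simp only [IsOptimal, Set.mem_setOf_eq, Set.mem_inter_iff, Set.mem_iInter]
  rw [he]
  refine MeasurableSet.inter ?_ (MeasurableSet.iInter fun γ' => ?_)
  · by_cases h : IsPathTo z γ
    · simp only [h]; simp
    · simp only [h]; simp
  · by_cases h : IsPathTo z γ'
    · have he2 : {ω : CfgNN | IsPathTo z γ' → plen (toCfg ω) γ' ≤ plen (toCfg ω) γ} =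
          {ω : CfgNN | plen (toCfg ω) γ' ≤ plen (toCfg ω) γ} := by
        ext ω; simp [h]
      rw [he2]
      exact measurableSet_le (measurable_plen γ') (measurable_plen γ)
    · have he2 : {ω : CfgNN | IsPathTo z γ' → plen (toCfg ω) γ' ≤ plen (toCfg ω) γ} =
          Set.univ := by
        ext ω; simp [h]
      rw [he2]
      exact MeasurableSet.univ

lemma measurableSet_isLowOptimal (z : Site) (γ : List Site) :
    MeasurableSet {ω : CfgNN | IsLowOptimal (toCfg ω) z γ} := by
  have he : {ω : CfgNN | IsLowOptimal (toCfg ω) z γ} =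
      {ω : CfgNN | IsOptimal (toCfg ω) z γ} ∩
        ⋂ γ' : List Site, {ω : CfgNN | IsOptimal (toCfg ω) z γ' → Below γ γ'} := by
    ext ω
    simp only [IsLowOptimal, Set.mem_setOf_eq, Set.mem_inter_iff, Set.mem_iInter]
  rw [he]
  refine (measurableSet_isOptimal z γ).inter (MeasurableSet.iInter fun γ' => ?_)
  by_cases h : Below γ γ'
  · have he2 : {ω : CfgNN | IsOptimal (toCfg ω) z γ' → Below γ γ'} = Set.univ := by
      ext ω; simp [h]
    rw [he2]; exact MeasurableSet.univ
  · have he2 : {ω : CfgNN | IsOptimal (toCfg ω) z γ' → Below γ γ'} =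
        {ω : CfgNN | IsOptimal (toCfg ω) z γ'}ᶜ := by
      ext ω; simp [h]
    rw [he2]
    exact (measurableSet_isOptimal z γ').compl

lemma measurableSet_omegaM (m : ℕ) : MeasurableSet (OmegaM m) := by
  have he : OmegaM m = {ω : CfgNN | IsLowOptimal (toCfg ω) ((m : ℤ), 1) (axisPath m)} := by
    ext ω
    exact lowOpt_eq_iff (axisPath_ne_nil m)
  rw [he]
  exact measurableSet_isLowOptimal _ _

/-- Theorem 3: for a translation-invariant probability measure `ℙ` and `A ⊆ 𝕋`
satisfying the growth property, `ℙ(T_{(m,1)} ∈ A, Ω_m) ≤ ℙ(T_{(1,1)} ∈ A, Ω_1)`. -/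
theorem stochastic_domination_axis (ℙ : Measure CfgNN) [IsProbabilityMeasure ℙ]
    (hinv : ∀ a : Site, ℙ.map (shift a) = ℙ)
    (m : ℕ) (hm : 1 ≤ m)
    (A : Set LPPTree) (hA_sub : A ⊆ TreeSet) (hA : GrowthProperty A)
    (hmeas : ∀ z ∈ posQuad, MeasurableSet {ω : CfgNN | subtree (toCfg ω) z ∈ A}) :
    ℙ ({ω : CfgNN | subtree (toCfg ω) ((m : ℤ), 1) ∈ A} ∩ OmegaM m)
      ≤ ℙ ({ω : CfgNN | subtree (toCfg ω) ((1, 1) : Site) ∈ A} ∩ OmegaM 1) := by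
  set a : Site := ((m : ℤ) - 1, 0) with ha
  set E1 : Set CfgNN :=
    {ω : CfgNN | subtree (toCfg ω) ((1, 1) : Site) ∈ A} ∩ OmegaM 1 with hE1
  have hE1meas : MeasurableSet E1 :=
    (hmeas ((1, 1) : Site) ⟨by norm_num, by norm_num⟩).inter (measurableSet_omegaM 1)
  have hsub : {ω : CfgNN | subtree (toCfg ω) ((m : ℤ), 1) ∈ A} ∩ OmegaM m ⊆
      shift a ⁻¹' E1 := by
    rintro ω ⟨hωA, hωm⟩
    have hωm' : lowOpt (toCfg ω) ((m : ℤ), 1) = axisPath m := hωm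
    have homega1 : lowOpt (toCfg (shift a ω)) ((1 : ℤ), (1 : ℤ)) = axisPath 1 :=
      core_omega1 (toCfg ω) m hm hωm'
    constructor
    · -- the subtree at (1,1) in the shifted configuration belongs to A
      show subtree (toCfg (shift a ω)) ((1, 1) : Site) ∈ A
      refine hA _ hωA _ ?_ ?_
      · exact ⟨toCfg (shift a ω), ((1, 1) : Site),
          fun s => (shift a ω s).coe_nonneg, ⟨by norm_num, by norm_num⟩, rfl⟩
      · rintro x ⟨z', hz', rfl⟩
        obtain ⟨hz'q, hz'mem⟩ := hz'
        obtain ⟨hq, hmem1⟩ := core_mem (toCfg ω) m hm hωm' z' hz'mem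
        refine ⟨z' - a, ⟨hq, hmem1⟩, ?_⟩
        show z' - a - ((1, 1) : Site) = z' - (((m : ℤ), 1) : Site)
        rw [sub_sub]
        congr 1
        rw [ha, Prod.ext_iff, Prod.fst_add, Prod.snd_add]
        constructor
        all_goals try simp
        all_goals omega
    · -- the shifted configuration lies in Ω₁
      show shift a ω ∈ OmegaM 1
      simp only [OmegaM, Set.mem_setOf_eq, Nat.cast_one]
      exact homega1
  calc ℙ ({ω : CfgNN | subtree (toCfg ω) ((m : ℤ), 1) ∈ A} ∩ OmegaM m)
      ≤ ℙ (shift a ⁻¹' E1) := measure_mono hsub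
    _ = (ℙ.map (shift a)) E1 := (Measure.map_apply (measurable_shift a) hE1meas).symm
    _ = ℙ E1 := by rw [hinv a]
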